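/- For the two-block multilayer SBM with true labeling z and uniform prior Π on all labelings [N] → {1,2}, and any integer r ≥ 0, the expected posterior mass outside the ball of absolute classification error r satisfies Err_z(r) ≤ 2 Σ_{r < k ≤ N/2} C(N,k) exp(−(1/2) I_T (N−k) k), where C(N,k) is the binomial coefficient and I_T = Σ_t I(p_t,q_t). -/

import Mathlib

/-- The set of unordered pairs `{i,j} ⊆ [N]`, encoded as ordered pairs with `i < j`. -/
abbrev PairIdx (N : ℕ) := {e : Fin N × Fin N // e.1 < e.2}

/-- Bernoulli density with mean `θ`. -/
def bern (θ : ℝ) (x : Bool) : ℝ := if x then θ else 1 - θ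

/-- Density of the two-block multilayer SBM with labeling `z`. -/
def sbmDensity {N T : ℕ} (z : Fin N → Fin 2) (p q : Fin T → ℝ)
    (X : PairIdx N → Fin T → Bool) : ℝ :=
  ∏ e : PairIdx N, ∏ t : Fin T,
    bern (if z e.1.1 = z e.1.2 then p t else q t) (X e t)

/-- Hamming distance between two labelings. -/
def hamming {N K : ℕ} (z w : Fin N → Fin K) : ℕ :=
  (Finset.univ.filter (fun i : Fin N => z i ≠ w i)).card

/-- Absolute classification error: Hamming distance up to swapping the two labels. -/
def dACE {N : ℕ} (w z : Fin N → Fin 2) : ℕ :=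
  min (hamming w z) (hamming w (fun i => Equiv.swap (0 : Fin 2) 1 (z i)))

/-- Twice the Rényi divergence of order 1/2 between `Ber(p)` and `Ber(q)`. -/
noncomputable def renyiBer (p q : ℝ) : ℝ :=
  -2 * Real.log (Real.sqrt (1 - p) * Real.sqrt (1 - q) + Real.sqrt p * Real.sqrt q)

/-! ### Auxiliary lemmas -/

lemma bern_pos {θ : ℝ} (h0 : 0 < θ) (h1 : θ < 1) (x : Bool) : 0 < bern θ x := by
  cases x <;> simp only [bern, if_true, if_false, Bool.false_eq_true, Bool.true_eq_false] <;>
    norm_num <;> linarith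

lemma sqrt_prod {ι : Type*} (s : Finset ι) (f : ι → ℝ) (h : ∀ i ∈ s, 0 ≤ f i) :
    Real.sqrt (∏ i ∈ s, f i) = ∏ i ∈ s, Real.sqrt (f i) := by
  induction s using Finset.cons_induction with
  | empty => simp
  | cons a s ha ih =>
    rw [Finset.prod_cons, Finset.prod_cons, Real.sqrt_mul (h a (Finset.mem_cons_self a s)),
      ih (fun i hi => h i (Finset.mem_cons_of_mem hi))]

lemma bern_true (θ : ℝ) : bern θ true = θ := rfl
lemma bern_false (θ : ℝ) : bern θ false = 1 - θ := by simp [bern]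

lemma sum_sqrt_bern_eq {a : ℝ} (h0 : 0 ≤ a) (h1 : a ≤ 1) :
    ∑ x : Bool, Real.sqrt (bern a x * bern a x) = 1 := by
  rw [Fintype.sum_bool, bern_true, bern_false,
    Real.sqrt_mul_self h0, Real.sqrt_mul_self (by linarith)]
  ring

lemma sum_sqrt_bern_mul {a b : ℝ} (ha0 : 0 ≤ a) (ha1 : a ≤ 1) :
    ∑ x : Bool, Real.sqrt (bern a x * bern b x)
      = Real.sqrt (1 - a) * Real.sqrt (1 - b) + Real.sqrt a * Real.sqrt b := by
  rw [Fintype.sum_bool, bern_true, bern_false, bern_true, bern_false,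
    Real.sqrt_mul ha0, Real.sqrt_mul (by linarith : (0:ℝ) ≤ 1 - a)]
  ring

lemma fin2_ne_iff : ∀ a b : Fin 2, (a ≠ Equiv.swap (0 : Fin 2) 1 b ↔ ¬ a ≠ b) := by decide

lemma hamming_add {N : ℕ} (w z : Fin N → Fin 2) :
    hamming w z + hamming w (fun i => Equiv.swap (0 : Fin 2) 1 (z i)) = N := by
  unfold hamming
  have h2 : (Finset.univ.filter
        (fun i : Fin N => w i ≠ (fun i => Equiv.swap (0 : Fin 2) 1 (z i)) i))
      = Finset.univ.filter (fun i : Fin N => ¬ w i ≠ z i) := by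
    apply Finset.filter_congr; intro i _
    simpa using fin2_ne_iff (w i) (z i)
  rw [h2, Finset.card_filter_add_card_filter_not, Finset.card_univ, Fintype.card_fin]

lemma hamming_le {N : ℕ} (w z : Fin N → Fin 2) : hamming w z ≤ N := by
  have := hamming_add w z; omega

lemma dACE_le_half {N : ℕ} (w z : Fin N → Fin 2) : dACE w z ≤ N / 2 := by
  have := hamming_add w z; unfold dACE; omega

lemma count_pairs {N : ℕ} (g : Fin N → Bool) :
    (Finset.univ.filter (fun e : PairIdx N => g e.1.1 ≠ g e.1.2)).card
      = (Finset.univ.filter (fun i => g i = true)).card *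
        (Finset.univ.filter (fun i => g i = false)).card := by
  classical
  set A := Finset.univ.filter (fun i => g i = true) with hA
  set B := Finset.univ.filter (fun i => g i = false) with hB
  have step1 : (Finset.univ.filter (fun e : PairIdx N => g e.1.1 ≠ g e.1.2)).card
      = ((Finset.univ : Finset (Fin N × Fin N)).filter
          (fun p => p.1 < p.2 ∧ g p.1 ≠ g p.2)).card := by
    apply Finset.card_bij (i := fun e _ => e.1)
    · intro e he
      rw [Finset.mem_filter] at he ⊢
      exact ⟨Finset.mem_univ _, e.2, he.2⟩
    · intro e₁ h₁ e₂ h₂ h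
      exact Subtype.ext h
    · intro p hp
      rw [Finset.mem_filter] at hp
      exact ⟨⟨p, hp.2.1⟩, Finset.mem_filter.mpr ⟨Finset.mem_univ _, hp.2.2⟩, rfl⟩
  have step2 : ((Finset.univ : Finset (Fin N × Fin N)).filter
        (fun p => p.1 < p.2 ∧ g p.1 ≠ g p.2)).card
      = ((Finset.univ : Finset (Fin N × Fin N)).filter
          (fun p => p.2 < p.1 ∧ g p.1 ≠ g p.2)).card := by
    apply Finset.card_bij (i := fun p _ => Prod.swap p)
    · intro p hp
      rw [Finset.mem_filter] at hp ⊢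
      exact ⟨Finset.mem_univ _, hp.2.1, hp.2.2.symm⟩
    · intro p₁ h₁ p₂ h₂ h
      exact Prod.swap_injective h
    · intro p hp
      rw [Finset.mem_filter] at hp
      exact ⟨Prod.swap p, Finset.mem_filter.mpr ⟨Finset.mem_univ _, hp.2.1, hp.2.2.symm⟩,
        Prod.swap_swap p⟩
  have step3 : ((Finset.univ : Finset (Fin N × Fin N)).filter
        (fun p => p.1 < p.2 ∧ g p.1 ≠ g p.2)).card
      + ((Finset.univ : Finset (Fin N × Fin N)).filter
          (fun p => p.2 < p.1 ∧ g p.1 ≠ g p.2)).card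
      = ((Finset.univ : Finset (Fin N × Fin N)).filter (fun p => g p.1 ≠ g p.2)).card := by
    rw [← Finset.card_union_of_disjoint]
    · congr 1
      ext p
      simp only [Finset.mem_union, Finset.mem_filter, Finset.mem_univ, true_and]
      constructor
      · rintro (⟨_, h⟩ | ⟨_, h⟩) <;> exact h
      · intro h
        have hne : p.1 ≠ p.2 := fun hEq => h (by rw [hEq])
        rcases lt_or_gt_of_ne hne with hlt | hgt
        · exact Or.inl ⟨hlt, h⟩
        · exact Or.inr ⟨hgt, h⟩
    · rw [Finset.disjoint_filter]
      intro p _ h1 h2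
      exact absurd h2.1 (not_lt.mpr (le_of_lt h1.1))
  have step4 : ((Finset.univ : Finset (Fin N × Fin N)).filter (fun p => g p.1 ≠ g p.2))
      = (A ×ˢ B) ∪ (B ×ˢ A) := by
    ext p
    simp only [Finset.mem_union, Finset.mem_filter, Finset.mem_univ, true_and,
      Finset.mem_product, hA, hB]
    cases hg1 : g p.1 <;> cases hg2 : g p.2 <;> simp
  have hdisj : Disjoint (A ×ˢ B) (B ×ˢ A) := by
    rw [Finset.disjoint_left]
    rintro p hp1 hp2
    rw [Finset.mem_product] at hp1 hp2
    have h1 := Finset.mem_filter.mp hp1.1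
    have h2 := Finset.mem_filter.mp hp2.1
    rw [h1.2] at h2
    exact Bool.noConfusion h2.2
  have step5 : ((Finset.univ : Finset (Fin N × Fin N)).filter
        (fun p => g p.1 ≠ g p.2)).card = 2 * (A.card * B.card) := by
    rw [step4, Finset.card_union_of_disjoint hdisj, Finset.card_product, Finset.card_product]
    ring
  omega

lemma fin2_decide_ne : ∀ a b c d : Fin 2,
    (¬((a = b) ↔ (c = d))) ↔ (decide (c ≠ a) ≠ decide (d ≠ b)) := by decide

lemma disagree_card {N : ℕ} (z w : Fin N → Fin 2) :
    (Finset.univ.filter (fun e : PairIdx N =>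
        ¬((z e.1.1 = z e.1.2) ↔ (w e.1.1 = w e.1.2)))).card
      = hamming w z * (N - hamming w z) := by
  classical
  set g : Fin N → Bool := fun i => decide (w i ≠ z i) with hg
  have h1 : (Finset.univ.filter (fun e : PairIdx N =>
      ¬((z e.1.1 = z e.1.2) ↔ (w e.1.1 = w e.1.2))))
      = Finset.univ.filter (fun e : PairIdx N => g e.1.1 ≠ g e.1.2) := by
    apply Finset.filter_congr
    intro e _
    simpa [hg] using fin2_decide_ne (z e.1.1) (z e.1.2) (w e.1.1) (w e.1.2)
  have h2 : (Finset.univ.filter (fun i => g i = true)).card = hamming w z := by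
    unfold hamming
    congr 1
    apply Finset.filter_congr
    intro i _
    simp [hg]
  have h3 : (Finset.univ.filter (fun i => g i = false)).card = N - hamming w z := by
    have hsplit := Finset.card_filter_add_card_filter_not
      (s := (Finset.univ : Finset (Fin N))) (fun i => g i = true)
    have heq : (Finset.univ.filter (fun i : Fin N => ¬ g i = true))
        = (Finset.univ.filter (fun i => g i = false)) := by
      apply Finset.filter_congr; intro i _; simp
    rw [heq] at hsplit
    rw [Finset.card_univ, Fintype.card_fin] at hsplit
    omega
  rw [h1, count_pairs, h2, h3]

lemma fin2_det : ∀ a b c : Fin 2, a ≠ c → b ≠ c → a = b := by decide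

lemma card_hamming_le {N : ℕ} (z : Fin N → Fin 2) (m : ℕ) :
    (Finset.univ.filter (fun w : Fin N → Fin 2 => hamming w z = m)).card ≤ N.choose m := by
  classical
  have := Finset.card_le_card_of_injOn
    (f := fun w : Fin N → Fin 2 => Finset.univ.filter (fun i => w i ≠ z i))
    (s := Finset.univ.filter (fun w : Fin N → Fin 2 => hamming w z = m))
    (t := Finset.univ.powersetCard m)
    ?_ ?_
  · rwa [Finset.card_powersetCard, Finset.card_univ, Fintype.card_fin] at this
  · intro w hw
    rw [Finset.mem_coe, Finset.mem_filter] at hw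
    rw [Finset.mem_coe, Finset.mem_powersetCard]
    exact ⟨Finset.subset_univ _, hw.2⟩
  · intro w₁ h₁ w₂ h₂ h
    funext i
    have hmem : i ∈ Finset.univ.filter (fun j => w₁ j ≠ z j)
        ↔ i ∈ Finset.univ.filter (fun j => w₂ j ≠ z j) := by beta_reduce at h; rw [h]
    simp only [Finset.mem_filter, Finset.mem_univ, true_and] at hmem
    by_cases hc : w₁ i ≠ z i
    · exact fin2_det _ _ _ hc (hmem.mp hc)
    · push_neg at hc
      by_cases hc2 : w₂ i ≠ z i
      · exact absurd (hmem.mpr hc2) (by simp [hc])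
      · push_neg at hc2; rw [hc, hc2]

lemma card_dACE_le {N : ℕ} (z : Fin N → Fin 2) (k : ℕ) (hk : k ≤ N) :
    (Finset.univ.filter (fun w : Fin N → Fin 2 => dACE w z = k)).card ≤ 2 * N.choose k := by
  classical
  have hsub : Finset.univ.filter (fun w : Fin N → Fin 2 => dACE w z = k)
      ⊆ Finset.univ.filter (fun w : Fin N → Fin 2 => hamming w z = k)
        ∪ Finset.univ.filter (fun w : Fin N → Fin 2 => hamming w z = N - k) := by
    intro w hw
    rw [Finset.mem_filter] at hw
    have hadd := hamming_add w z
    rw [Finset.mem_union, Finset.mem_filter, Finset.mem_filter]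
    unfold dACE at hw
    rcases hw with ⟨_, hw⟩
    simp only [Finset.mem_univ, true_and]
    omega
  calc (Finset.univ.filter (fun w : Fin N → Fin 2 => dACE w z = k)).card
      ≤ _ := Finset.card_le_card hsub
    _ ≤ (Finset.univ.filter (fun w : Fin N → Fin 2 => hamming w z = k)).card
        + (Finset.univ.filter (fun w : Fin N → Fin 2 => hamming w z = N - k)).card :=
      Finset.card_union_le _ _
    _ ≤ N.choose k + N.choose (N - k) :=
      Nat.add_le_add (card_hamming_le z k) (card_hamming_le z (N - k))
    _ = 2 * N.choose k := by rw [Nat.choose_symm hk]; ring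

lemma exp_renyi {p q : ℝ} (hp : 0 < p ∧ p < 1) (hq : 0 < q ∧ q < 1) :
    Real.exp (-(1/2) * renyiBer p q)
      = Real.sqrt (1 - p) * Real.sqrt (1 - q) + Real.sqrt p * Real.sqrt q := by
  have hpos : 0 < Real.sqrt (1 - p) * Real.sqrt (1 - q) + Real.sqrt p * Real.sqrt q := by
    have h1 : 0 < Real.sqrt p * Real.sqrt q :=
      mul_pos (Real.sqrt_pos.mpr hp.1) (Real.sqrt_pos.mpr hq.1)
    have h2 : 0 ≤ Real.sqrt (1 - p) * Real.sqrt (1 - q) :=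
      mul_nonneg (Real.sqrt_nonneg _) (Real.sqrt_nonneg _)
    linarith
  rw [renyiBer]
  rw [show -(1/2 : ℝ) * (-2 * Real.log _) = Real.log _ by ring]
  exact Real.exp_log hpos

lemma bhatta {N T : ℕ} (p q : Fin T → ℝ)
    (hp : ∀ t, 0 < p t ∧ p t < 1) (hq : ∀ t, 0 < q t ∧ q t < 1)
    (z w : Fin N → Fin 2) :
    ∑ X : PairIdx N → Fin T → Bool,
        Real.sqrt (sbmDensity z p q X * sbmDensity w p q X)
      = Real.exp (-(1/2) * (∑ t, renyiBer (p t) (q t)) *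
          ((hamming w z * (N - hamming w z) : ℕ) : ℝ)) := by
  classical
  have hθ : ∀ (u : Fin N → Fin 2) (e : PairIdx N) (t : Fin T),
      0 < (if u e.1.1 = u e.1.2 then p t else q t) ∧
        (if u e.1.1 = u e.1.2 then p t else q t) < 1 := by
    intro u e t; split_ifs; exacts [hp t, hq t]
  have hfac : ∀ X : PairIdx N → Fin T → Bool,
      Real.sqrt (sbmDensity z p q X * sbmDensity w p q X)
        = ∏ e : PairIdx N, ∏ t : Fin T,
            Real.sqrt (bern (if z e.1.1 = z e.1.2 then p t else q t) (X e t) *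
              bern (if w e.1.1 = w e.1.2 then p t else q t) (X e t)) := by
    intro X
    unfold sbmDensity
    rw [← Finset.prod_mul_distrib]
    rw [sqrt_prod _ _ (fun e _ => by
      rw [← Finset.prod_mul_distrib]
      exact Finset.prod_nonneg (fun t _ => mul_nonneg
        (le_of_lt (bern_pos (hθ z e t).1 (hθ z e t).2 _))
        (le_of_lt (bern_pos (hθ w e t).1 (hθ w e t).2 _))))]
    apply Finset.prod_congr rfl
    intro e _
    rw [← Finset.prod_mul_distrib]
    exact sqrt_prod _ _ (fun t _ => mul_nonneg
      (le_of_lt (bern_pos (hθ z e t).1 (hθ z e t).2 _))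
      (le_of_lt (bern_pos (hθ w e t).1 (hθ w e t).2 _)))
  simp only [hfac]
  have hsum1 : ∑ X : PairIdx N → Fin T → Bool,
      ∏ e : PairIdx N, ∏ t : Fin T,
        Real.sqrt (bern (if z e.1.1 = z e.1.2 then p t else q t) (X e t) *
          bern (if w e.1.1 = w e.1.2 then p t else q t) (X e t))
      = ∏ e : PairIdx N, ∑ v : Fin T → Bool, ∏ t : Fin T,
          Real.sqrt (bern (if z e.1.1 = z e.1.2 then p t else q t) (v t) *
            bern (if w e.1.1 = w e.1.2 then p t else q t) (v t)) := by
    rw [Finset.prod_univ_sum (fun _ => (Finset.univ : Finset (Fin T → Bool)))]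
    rw [Fintype.piFinset_univ]
  rw [hsum1]
  have hsum2 : ∀ e : PairIdx N,
      (∑ v : Fin T → Bool, ∏ t : Fin T,
        Real.sqrt (bern (if z e.1.1 = z e.1.2 then p t else q t) (v t) *
          bern (if w e.1.1 = w e.1.2 then p t else q t) (v t)))
      = ∏ t : Fin T, ∑ b : Bool,
          Real.sqrt (bern (if z e.1.1 = z e.1.2 then p t else q t) b *
            bern (if w e.1.1 = w e.1.2 then p t else q t) b) := by
    intro e
    rw [Finset.prod_univ_sum (fun _ => (Finset.univ : Finset Bool))]
    rw [Fintype.piFinset_univ]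
  simp only [hsum2]
  have hedge : ∀ e : PairIdx N,
      (∏ t : Fin T, ∑ b : Bool,
        Real.sqrt (bern (if z e.1.1 = z e.1.2 then p t else q t) b *
          bern (if w e.1.1 = w e.1.2 then p t else q t) b))
      = if ¬((z e.1.1 = z e.1.2) ↔ (w e.1.1 = w e.1.2)) then
          Real.exp (-(1/2) * ∑ t, renyiBer (p t) (q t)) else 1 := by
    intro e
    by_cases hzz : z e.1.1 = z e.1.2 <;> by_cases hww : w e.1.1 = w e.1.2
    · rw [if_neg (not_not_intro (iff_of_true hzz hww))]
      simp only [if_pos hzz, if_pos hww]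
      exact Finset.prod_eq_one (fun t _ =>
        sum_sqrt_bern_eq (le_of_lt (hp t).1) (le_of_lt (hp t).2))
    · rw [if_pos (fun h : _ ↔ _ => hww (h.mp hzz))]
      simp only [if_pos hzz, if_neg hww]
      calc ∏ t : Fin T, ∑ b : Bool, Real.sqrt (bern (p t) b * bern (q t) b)
          = ∏ t : Fin T, Real.exp (-(1/2) * renyiBer (p t) (q t)) := by
            apply Finset.prod_congr rfl
            intro t _
            rw [sum_sqrt_bern_mul (le_of_lt (hp t).1) (le_of_lt (hp t).2)]
            exact (exp_renyi (hp t) (hq t)).symm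
        _ = Real.exp (∑ t, -(1/2) * renyiBer (p t) (q t)) := (Real.exp_sum _ _).symm
        _ = Real.exp (-(1/2) * ∑ t, renyiBer (p t) (q t)) := by rw [← Finset.mul_sum]
    · rw [if_pos (fun h : _ ↔ _ => hzz (h.mpr hww))]
      simp only [if_neg hzz, if_pos hww]
      calc ∏ t : Fin T, ∑ b : Bool, Real.sqrt (bern (q t) b * bern (p t) b)
          = ∏ t : Fin T, Real.exp (-(1/2) * renyiBer (p t) (q t)) := by
            apply Finset.prod_congr rfl
            intro t _
            rw [sum_sqrt_bern_mul (le_of_lt (hq t).1) (le_of_lt (hq t).2)]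
            rw [exp_renyi (hp t) (hq t)]
            ring
        _ = Real.exp (∑ t, -(1/2) * renyiBer (p t) (q t)) := (Real.exp_sum _ _).symm
        _ = Real.exp (-(1/2) * ∑ t, renyiBer (p t) (q t)) := by rw [← Finset.mul_sum]
    · rw [if_neg (not_not_intro (iff_of_false hzz hww))]
      simp only [if_neg hzz, if_neg hww]
      exact Finset.prod_eq_one (fun t _ =>
        sum_sqrt_bern_eq (le_of_lt (hq t).1) (le_of_lt (hq t).2))
  calc ∏ e : PairIdx N, ∏ t : Fin T, ∑ b : Bool,
        Real.sqrt (bern (if z e.1.1 = z e.1.2 then p t else q t) b *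
          bern (if w e.1.1 = w e.1.2 then p t else q t) b)
      = ∏ e : PairIdx N, if ¬((z e.1.1 = z e.1.2) ↔ (w e.1.1 = w e.1.2)) then
          Real.exp (-(1/2) * ∑ t, renyiBer (p t) (q t)) else 1 :=
        Finset.prod_congr rfl (fun e _ => hedge e)
    _ = Real.exp (-(1/2) * ∑ t, renyiBer (p t) (q t)) ^
          (Finset.univ.filter (fun e : PairIdx N =>
            ¬((z e.1.1 = z e.1.2) ↔ (w e.1.1 = w e.1.2)))).card := by
        rw [Finset.prod_ite, Finset.prod_const, Finset.prod_const_one, mul_one]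
    _ = _ := by
        rw [disagree_card z w, ← Real.exp_nat_mul]
        congr 1
        ring

/-- For the two-block multilayer SBM with uniform prior on labelings, the expected
posterior mass outside the ball of absolute classification error `r` around the true
labeling `z` satisfies
`Err_z(r) ≤ 2 Σ_{r < k ≤ N/2} C(N,k) exp(−(1/2) I_T (N−k) k)`. -/
theorem stmt11 (N T : ℕ) (p q : Fin T → ℝ)
    (hp : ∀ t, 0 < p t ∧ p t < 1) (hq : ∀ t, 0 < q t ∧ q t < 1)
    (z : Fin N → Fin 2) (r : ℕ) :
    ∑ X : PairIdx N → Fin T → Bool, sbmDensity z p q X *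
        ((∑ w ∈ Finset.univ.filter (fun w : Fin N → Fin 2 => r < dACE w z),
            ((2 : ℝ) ^ N)⁻¹ * sbmDensity w p q X) /
          (∑ w' : Fin N → Fin 2, ((2 : ℝ) ^ N)⁻¹ * sbmDensity w' p q X)) ≤
      2 * ∑ k ∈ Finset.Ioc r (N / 2), (N.choose k : ℝ) *
        Real.exp (-(1 / 2) * (∑ t, renyiBer (p t) (q t)) * ((N : ℝ) - k) * k) := by
  classical
  set c : ℝ := ((2 : ℝ) ^ N)⁻¹ with hc
  have hcpos : 0 < c := by positivity
  have hPpos : ∀ (u : Fin N → Fin 2) (X : PairIdx N → Fin T → Bool),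
      0 < sbmDensity u p q X := by
    intro u X
    unfold sbmDensity
    apply Finset.prod_pos
    intro e _
    apply Finset.prod_pos
    intro t _
    have : 0 < (if u e.1.1 = u e.1.2 then p t else q t) ∧
        (if u e.1.1 = u e.1.2 then p t else q t) < 1 := by
      split_ifs; exacts [hp t, hq t]
    exact bern_pos this.1 this.2 _
  set S := Finset.univ.filter (fun w : Fin N → Fin 2 => r < dACE w z) with hS
  set D : (PairIdx N → Fin T → Bool) → ℝ :=
    fun X => ∑ w' : Fin N → Fin 2, c * sbmDensity w' p q X with hD
  have hDpos : ∀ X, 0 < D X := by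
    intro X
    apply Finset.sum_pos
    · intro u _; exact mul_pos hcpos (hPpos u X)
    · exact ⟨z, Finset.mem_univ z⟩
  have hDge : ∀ (X) (u : Fin N → Fin 2), c * sbmDensity u p q X ≤ D X := by
    intro X u
    exact Finset.single_le_sum (fun v _ => le_of_lt (mul_pos hcpos (hPpos v X)))
      (Finset.mem_univ u)
  -- termwise bound
  have hterm : ∀ (X) (w : Fin N → Fin 2),
      sbmDensity z p q X * (c * sbmDensity w p q X) / D X
        ≤ Real.sqrt (sbmDensity z p q X * sbmDensity w p q X) := by
    intro X w
    set a := sbmDensity z p q X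
    set b := sbmDensity w p q X
    have ha := hPpos z X
    have hb := hPpos w X
    have hs : 0 ≤ Real.sqrt (a * b) := Real.sqrt_nonneg _
    have hkey : c * Real.sqrt (a * b) ≤ D X := by
      rcases le_total a b with h | h
      · calc c * Real.sqrt (a * b) ≤ c * b := by
              apply mul_le_mul_of_nonneg_left _ (le_of_lt hcpos)
              calc Real.sqrt (a * b) ≤ Real.sqrt (b * b) :=
                    Real.sqrt_le_sqrt (mul_le_mul_of_nonneg_right h (le_of_lt hb))
                _ = b := Real.sqrt_mul_self (le_of_lt hb)
          _ ≤ D X := hDge X w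
      · calc c * Real.sqrt (a * b) ≤ c * a := by
              apply mul_le_mul_of_nonneg_left _ (le_of_lt hcpos)
              calc Real.sqrt (a * b) ≤ Real.sqrt (a * a) :=
                    Real.sqrt_le_sqrt (mul_le_mul_of_nonneg_left h (le_of_lt ha))
                _ = a := Real.sqrt_mul_self (le_of_lt ha)
          _ ≤ D X := hDge X z
    rw [div_le_iff₀ (hDpos X)]
    calc a * (c * b) = c * (a * b) := by ring
      _ = c * Real.sqrt (a * b) ^ 2 := by
          rw [Real.sq_sqrt (le_of_lt (mul_pos ha hb))]
      _ = Real.sqrt (a * b) * (c * Real.sqrt (a * b)) := by ring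
      _ ≤ Real.sqrt (a * b) * D X := mul_le_mul_of_nonneg_left hkey hs
  -- main chain
  have hstep1 : ∑ X : PairIdx N → Fin T → Bool, sbmDensity z p q X *
        ((∑ w ∈ S, c * sbmDensity w p q X) / D X)
      ≤ ∑ w ∈ S, ∑ X : PairIdx N → Fin T → Bool,
          Real.sqrt (sbmDensity z p q X * sbmDensity w p q X) := by
    rw [Finset.sum_comm]
    apply Finset.sum_le_sum
    intro X _
    rw [Finset.sum_div, Finset.mul_sum]
    apply Finset.sum_le_sum
    intro w _
    rw [← mul_div_assoc]
    exact hterm X w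
  have hstep2 : ∑ w ∈ S, ∑ X : PairIdx N → Fin T → Bool,
        Real.sqrt (sbmDensity z p q X * sbmDensity w p q X)
      = ∑ w ∈ S, Real.exp (-(1/2) * (∑ t, renyiBer (p t) (q t)) *
          ((hamming w z * (N - hamming w z) : ℕ) : ℝ)) :=
    Finset.sum_congr rfl (fun w _ => bhatta p q hp hq z w)
  set I : ℝ := ∑ t, renyiBer (p t) (q t) with hI
  have hgroup : ∑ w ∈ S, Real.exp (-(1/2) * I * ((hamming w z * (N - hamming w z) : ℕ) : ℝ))
      ≤ 2 * ∑ k ∈ Finset.Ioc r (N / 2), (N.choose k : ℝ) *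
          Real.exp (-(1 / 2) * I * ((N : ℝ) - k) * k) := by
    have hmaps : ∀ w ∈ S, dACE w z ∈ Finset.Ioc r (N / 2) := by
      intro w hw
      rw [hS, Finset.mem_filter] at hw
      exact Finset.mem_Ioc.mpr ⟨hw.2, dACE_le_half w z⟩
    rw [← Finset.sum_fiberwise_of_maps_to hmaps]
    conv_rhs => rw [Finset.mul_sum]
    apply Finset.sum_le_sum
    intro k hk
    rw [Finset.mem_Ioc] at hk
    have hkN : k ≤ N := le_trans hk.2 (Nat.div_le_self N 2)
    have hval : ∀ w ∈ S.filter (fun w => dACE w z = k),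
        Real.exp (-(1/2) * I * ((hamming w z * (N - hamming w z) : ℕ) : ℝ))
          = Real.exp (-(1 / 2) * I * ((N : ℝ) - k) * k) := by
      intro w hw
      rw [Finset.mem_filter] at hw
      have hd := hamming_add w z
      have hdk : hamming w z * (N - hamming w z) = k * (N - k) := by
        have := hw.2
        unfold dACE at this
        have hle := hamming_le w z
        rcases Nat.le_total (hamming w z) (hamming w (fun i => Equiv.swap (0 : Fin 2) 1 (z i)))
          with h | h
        · rw [min_eq_left h] at this; rw [this]
        · rw [min_eq_right h] at this
          have h2 : N - k = hamming w z := by omega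
          have h1 : k = N - hamming w z := by omega
          rw [h2, h1, Nat.mul_comm]
      rw [hdk]
      congr 1
      have : ((k * (N - k) : ℕ) : ℝ) = (k : ℝ) * ((N : ℝ) - k) := by
        push_cast [Nat.cast_sub hkN]
        ring
      rw [this]
      ring
    rw [Finset.sum_congr rfl hval, Finset.sum_const, nsmul_eq_mul]
    have hcard : (S.filter (fun w => dACE w z = k)).card ≤ 2 * N.choose k := by
      calc (S.filter (fun w => dACE w z = k)).card
          ≤ (Finset.univ.filter (fun w : Fin N → Fin 2 => dACE w z = k)).card := by
            apply Finset.card_le_card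
            intro w hw
            rw [Finset.mem_filter] at hw ⊢
            exact ⟨Finset.mem_univ _, hw.2⟩
        _ ≤ 2 * N.choose k := card_dACE_le z k hkN
    calc ((S.filter (fun w => dACE w z = k)).card : ℝ) *
          Real.exp (-(1 / 2) * I * ((N : ℝ) - k) * k)
        ≤ (2 * N.choose k : ℕ) * Real.exp (-(1 / 2) * I * ((N : ℝ) - k) * k) := by
          apply mul_le_mul_of_nonneg_right _ (le_of_lt (Real.exp_pos _))
          exact_mod_cast hcard
      _ = 2 * ((N.choose k : ℝ) * Real.exp (-(1 / 2) * I * ((N : ℝ) - k) * k)) := by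
          push_cast; ring
  calc ∑ X : PairIdx N → Fin T → Bool, sbmDensity z p q X *
        ((∑ w ∈ S, c * sbmDensity w p q X) / D X)
      ≤ ∑ w ∈ S, ∑ X : PairIdx N → Fin T → Bool,
          Real.sqrt (sbmDensity z p q X * sbmDensity w p q X) := hstep1
    _ = ∑ w ∈ S, Real.exp (-(1/2) * I * ((hamming w z * (N - hamming w z) : ℕ) : ℝ)) := hstep2
    _ ≤ 2 * ∑ k ∈ Finset.Ioc r (N / 2), (N.choose k : ℝ) *
          Real.exp (-(1 / 2) * I * ((N : ℝ) - k) * k) := hgroup
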